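/- The magnitude of dual complex numbers satisfies the triangle inequality: |p + q| ≤ |p| + |q| for all dual complex numbers p, q, where ≤ is the total order on dual numbers. -/

import Mathlib

open TrivSqZeroExt

/-- The magnitude of a dual complex number `q = q_st + q_I ε`, a dual number:
`|q| = |q_st| + (Re(q_st·conj(q_I))/|q_st|) ε` if `q_st ≠ 0`, and `|q| = |q_I| ε` otherwise. -/
noncomputable def dcAbs (q : DualNumber ℂ) : DualNumber ℝ :=
  if q.fst ≠ 0 then
    (‖q.fst‖, (q.fst * starRingEnd ℂ q.snd).re / ‖q.fst‖)
  else (0, ‖q.snd‖)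

/-- The order on dual numbers: `a + bε ≤ c + dε` iff `a < c`, or `a = c` and `b ≤ d`. -/
def dualLe (p q : DualNumber ℝ) : Prop :=
  p.fst < q.fst ∨ (p.fst = q.fst ∧ p.snd ≤ q.snd)

private lemma fst_add' (x y : ℝ × ℝ) :
    fst (@HAdd.hAdd (DualNumber ℝ) (DualNumber ℝ) (DualNumber ℝ) _ x y) = x.1 + y.1 := rfl

private lemma snd_add' (x y : ℝ × ℝ) :
    snd (@HAdd.hAdd (DualNumber ℝ) (DualNumber ℝ) (DualNumber ℝ) _ x y) = x.2 + y.2 := rfl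

private lemma re_div_le (c b : ℂ) (hc : c ≠ 0) :
    (c * starRingEnd ℂ b).re / ‖c‖ ≤ ‖b‖ := by
  have hA : 0 < ‖c‖ := norm_pos_iff.mpr hc
  rw [div_le_iff₀ hA]
  calc (c * starRingEnd ℂ b).re ≤ ‖c * starRingEnd ℂ b‖ :=
        Complex.re_le_norm _
    _ = ‖b‖ * ‖c‖ := by
        rw [norm_mul, Complex.norm_conj, mul_comm]

private lemma key_eq (a c b d : ℂ) (ha : a ≠ 0) (hc : c ≠ 0)
    (h : ‖a + c‖ = ‖a‖ + ‖c‖) :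
    ((a + c) * starRingEnd ℂ (b + d)).re / ‖a + c‖ =
      (a * starRingEnd ℂ b).re / ‖a‖ +
        (c * starRingEnd ℂ d).re / ‖c‖ := by
  have hray : SameRay ℝ a c := sameRay_iff_norm_add.mpr (by
    simpa using h)
  obtain ⟨r, s, hr, hs, hrs⟩ := hray.exists_pos ha hc
  set t : ℝ := r / s with ht_def
  have ht : 0 < t := div_pos hr hs
  have hc' : c = (t : ℂ) * a := by
    have h2 : (r : ℂ) * a = (s : ℂ) * c := by
      simpa [Complex.real_smul] using hrs
    have hs' : (s : ℂ) ≠ 0 := by exact_mod_cast hs.ne'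
    rw [ht_def]
    push_cast
    field_simp
    linear_combination -h2
  have hA : (0:ℝ) < ‖a‖ := norm_pos_iff.mpr ha
  have habsc : ‖c‖ = t * ‖a‖ := by
    rw [hc', norm_mul, Complex.norm_real, Real.norm_eq_abs, abs_of_pos ht]
  have habsac : ‖a + c‖ = (1 + t) * ‖a‖ := by
    have e : a + c = ((1 + t : ℝ) : ℂ) * a := by rw [hc']; push_cast; ring
    rw [e, norm_mul, Complex.norm_real, Real.norm_eq_abs, abs_of_pos (by linarith)]
  have hnum : ((a + c) * starRingEnd ℂ (b + d)).re =
      (1 + t) * ((a * starRingEnd ℂ b).re + (a * starRingEnd ℂ d).re) := by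
    have e : (a + c) * starRingEnd ℂ (b + d) =
        ((1 + t : ℝ) : ℂ) * (a * starRingEnd ℂ b + a * starRingEnd ℂ d) := by
      rw [hc', map_add]; push_cast; ring
    rw [e, Complex.re_ofReal_mul, Complex.add_re]
  have hnum2 : (c * starRingEnd ℂ d).re = t * (a * starRingEnd ℂ d).re := by
    rw [hc', mul_assoc, Complex.re_ofReal_mul]
  rw [hnum, hnum2, habsc, habsac]
  field_simp

private lemma dcAbs_of_ne (x : DualNumber ℂ) (h : x.fst ≠ 0) :
    dcAbs x = (‖x.fst‖, (x.fst * starRingEnd ℂ x.snd).re / ‖x.fst‖) :=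
  if_pos h

private lemma dcAbs_of_eq (x : DualNumber ℂ) (h : x.fst = 0) :
    dcAbs x = (0, ‖x.snd‖) :=
  if_neg (by simp [h])

theorem dcAbs_add_le (p q : DualNumber ℂ) :
    dualLe (dcAbs (p + q)) (dcAbs p + dcAbs q) := by
  by_cases ha : p.fst = 0 <;> by_cases hc : q.fst = 0
  · -- both zero
    rw [dcAbs_of_eq (p + q) (by rw [fst_add, ha, hc, add_zero]),
      dcAbs_of_eq p ha, dcAbs_of_eq q hc]
    right
    refine ⟨by simp [dualLe, fst_add, fst_mk, fst_add'], ?_⟩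
    simp only [snd_add, snd_mk, snd_add']
    exact norm_add_le p.snd q.snd
  · -- p.fst = 0, q.fst ≠ 0
    have hac : (p + q).fst ≠ 0 := by rw [fst_add, ha, zero_add]; exact hc
    rw [dcAbs_of_ne (p + q) hac, dcAbs_of_eq p ha, dcAbs_of_ne q hc]
    right
    constructor
    · simp [fst_add, fst_mk, snd_mk, ha, fst_add']
    · simp only [snd_add, snd_mk, fst_add, ha, zero_add, map_add, mul_add, snd_add',
        Complex.add_re, add_div]
      have := re_div_le q.fst p.snd hc
      linarith
  · -- p.fst ≠ 0, q.fst = 0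
    have hac : (p + q).fst ≠ 0 := by rw [fst_add, hc, add_zero]; exact ha
    rw [dcAbs_of_ne (p + q) hac, dcAbs_of_ne p ha, dcAbs_of_eq q hc]
    right
    constructor
    · simp [fst_add, fst_mk, snd_mk, hc, fst_add']
    · simp only [snd_add, snd_mk, fst_add, hc, add_zero, map_add, mul_add, snd_add',
        Complex.add_re, add_div]
      have := re_div_le p.fst q.snd ha
      linarith
  · by_cases hac : p.fst + q.fst = 0
    · -- sum of nonzero firsts is zero
      rw [dcAbs_of_eq (p + q) (by rw [fst_add]; exact hac),
        dcAbs_of_ne p ha, dcAbs_of_ne q hc]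
      left
      simp only [fst_add, fst_mk, fst_add']
      have h1 : (0:ℝ) < ‖p.fst‖ := norm_pos_iff.mpr ha
      have h2 : (0:ℝ) < ‖q.fst‖ := norm_pos_iff.mpr hc
      linarith
    · rw [dcAbs_of_ne (p + q) (by rw [fst_add]; exact hac),
        dcAbs_of_ne p ha, dcAbs_of_ne q hc]
      rcases lt_or_eq_of_le (norm_add_le p.fst q.fst) with hlt | heq
      · left
        simpa only [fst_add, snd_add, fst_mk, fst_add'] using hlt
      · right
        constructor
        · simpa only [fst_add, snd_add, fst_mk, fst_add'] using heq
        · simp only [fst_add, snd_add, snd_mk, snd_add']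
          exact le_of_eq (key_eq p.fst q.fst p.snd q.snd ha hc (by simpa [fst_add] using heq))
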